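/- Let the discrete-time LTI system x(k+1) = A x(k) + B u(k), y(k) = C x(k) with A ∈ ℝ^{n×n}, B ∈ ℝ^{n×q}, C ∈ ℝ^{p×n} have (A, B) controllable. Let (u^d, y^d) be a length-T input/output trajectory of the system and let L ≥ 1. If u^d is L-Page exciting of order n + 1, then for every length-L input/output trajectory (u, y) of the system there exists a vector g ∈ ℝ^{⌊T/L⌋} such that 𝓟_L(u^d) g = col(u) and 𝓟_L(y^d) g = col(y). -/

import Mathlib

open Matrix

/-- The block Page matrix of depth `k` of a signal `ω : {0,…,T−1} → ℝ^q`: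
its `(i,j)` block entry (for `i < k`, `j < ⌊T/k⌋`) is the vector `ω(jk+i) ∈ ℝ^q`. -/
noncomputable def pageMat {q : ℕ} (T : ℕ) (ω : Fin T → Fin q → ℝ) (k : ℕ) :
    Matrix (Fin k × Fin q) (Fin (T / k)) ℝ := fun r c =>
  if h : (c : ℕ) * k + (r.1 : ℕ) < T then ω ⟨(c : ℕ) * k + (r.1 : ℕ), h⟩ r.2 else 0

/-- The vertical stacking of the depth-`k` block Page matrices of the shifted signals
`ω(·+rk)` for `r = 0,…,l−1`, each truncated to its first `⌊T/k⌋−l+1` columns: its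
`((r,i),j)` block entry is `ω((j+r)k + i)`. -/
noncomputable def pageStackMat {q : ℕ} (T : ℕ) (ω : Fin T → Fin q → ℝ) (k l : ℕ) :
    Matrix (Fin l × Fin k × Fin q) (Fin (T / k - l + 1)) ℝ := fun r c =>
  if h : ((c : ℕ) + (r.1 : ℕ)) * k + (r.2.1 : ℕ) < T then
    ω ⟨((c : ℕ) + (r.1 : ℕ)) * k + (r.2.1 : ℕ), h⟩ r.2.2
  else 0

/-- A signal is `k`-Page exciting of order `l` if the stacked Page matrix
has full row rank `q·k·l`. -/
def PageExciting {q : ℕ} (T : ℕ) (ω : Fin T → Fin q → ℝ) (k l : ℕ) : Prop :=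
  (pageStackMat T ω k l).rank = q * k * l

/-- The controllability matrix `[B, AB, …, A^{n−1}B]`. -/
noncomputable def ctrbMat {n : ℕ} {ι : Type} [Fintype ι]
    (A : Matrix (Fin n) (Fin n) ℝ) (B : Matrix (Fin n) ι ℝ) :
    Matrix (Fin n) (Fin n × ι) ℝ :=
  Matrix.of fun i p => (A ^ (p.1 : ℕ) * B) i p.2

/-- The pair `(A, B)` is controllable if the controllability matrix has rank `n`. -/
def Controllable {n : ℕ} {ι : Type} [Fintype ι]
    (A : Matrix (Fin n) (Fin n) ℝ) (B : Matrix (Fin n) ι ℝ) : Prop :=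
  (ctrbMat A B).rank = n

/-- `(u, y)` is a length-`L` input/output trajectory of the LTI system
`x(k+1) = A x(k) + B u(k)`, `y(k) = C x(k)`. -/
def IsTraj {n q p : ℕ} (A : Matrix (Fin n) (Fin n) ℝ) (B : Matrix (Fin n) (Fin q) ℝ)
    (C : Matrix (Fin p) (Fin n) ℝ) (L : ℕ)
    (u : Fin L → Fin q → ℝ) (y : Fin L → Fin p → ℝ) : Prop :=
  ∃ x : Fin (L + 1) → Fin n → ℝ,
    ∀ k : Fin L, x k.succ = A *ᵥ x k.castSucc + B *ᵥ u k ∧ y k = C *ᵥ x k.castSucc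

/-- `col(u)`: the column vector obtained by stacking `u(0), …, u(L−1)`. -/
def colVec {L q : ℕ} (u : Fin L → Fin q → ℝ) : Fin L × Fin q → ℝ := fun r => u r.1 r.2


private lemma dot_sum_right {ι α : Type*} [Fintype α] (s : Finset ι)
    (v : α → ℝ) (w : ι → α → ℝ) :
    v ⬝ᵥ (∑ r ∈ s, w r) = ∑ r ∈ s, v ⬝ᵥ w r := by
  simp [dotProduct, Finset.mul_sum]
  exact Finset.sum_comm

private lemma sum_matrix_mulVec {ι α β : Type*} [Fintype α] [Fintype β] (s : Finset ι)
    (P : ι → Matrix β α ℝ) (x : α → ℝ) :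
    (∑ r ∈ s, P r) *ᵥ x = ∑ r ∈ s, P r *ᵥ x := by
  funext i
  simp [Matrix.mulVec, dotProduct, Matrix.sum_apply, Finset.sum_apply, Finset.sum_mul]
  exact Finset.sum_comm

private lemma mulVec_sum_right {ι α β : Type*} [Fintype α] [Fintype β] (s : Finset ι)
    (P : Matrix β α ℝ) (w : ι → α → ℝ) :
    P *ᵥ (∑ r ∈ s, w r) = ∑ r ∈ s, P *ᵥ w r := by
  funext i
  simp [Matrix.mulVec, dotProduct, Finset.sum_apply, Finset.mul_sum]
  exact Finset.sum_comm

private lemma vecMul_eq_zero_of_rank {m' n' : Type} [Fintype m'] [Fintype n']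
    (M : Matrix m' n' ℝ) (h : M.rank = Fintype.card m')
    (v : m' → ℝ) (hv : v ᵥ* M = 0) : v = 0 := by
  have hT : Mᵀ.rank = Fintype.card m' := by rw [Matrix.rank_transpose]; exact h
  have h1 := Mᵀ.mulVecLin.finrank_range_add_finrank_ker
  rw [Module.finrank_fintype_fun_eq_card] at h1
  have h2 : Module.finrank ℝ (LinearMap.ker Mᵀ.mulVecLin) = 0 := by
    have h3 : Mᵀ.rank = Module.finrank ℝ (LinearMap.range Mᵀ.mulVecLin) := rfl
    omega
  have h4 : LinearMap.ker Mᵀ.mulVecLin = ⊥ := Submodule.finrank_eq_zero.mp h2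
  have h5 : v ∈ LinearMap.ker Mᵀ.mulVecLin := by
    simp only [LinearMap.mem_ker, Matrix.mulVecLin_apply, Matrix.mulVec_transpose]
    exact hv
  rw [h4] at h5
  simpa using h5

private lemma mulVec_surj_of_vecMul_inj {m' n' : Type} [Fintype m'] [Fintype n']
    (M : Matrix m' n' ℝ) (h : ∀ v : m' → ℝ, v ᵥ* M = 0 → v = 0) :
    Function.Surjective (fun g => M *ᵥ g) := by
  have hinj : Function.Injective Mᵀ.mulVecLin := by
    rw [← LinearMap.ker_eq_bot, Submodule.eq_bot_iff]
    intro v hv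
    simp only [LinearMap.mem_ker, Matrix.mulVecLin_apply, Matrix.mulVec_transpose] at hv
    exact h v hv
  have h1 : Mᵀ.rank = Fintype.card m' := by
    have := LinearMap.finrank_range_of_inj hinj
    rw [Module.finrank_fintype_fun_eq_card] at this
    exact this
  have h2 : M.rank = Fintype.card m' := by rw [← Matrix.rank_transpose]; exact h1
  have h3 : LinearMap.range M.mulVecLin = ⊤ := by
    apply Submodule.eq_top_of_finrank_eq
    rw [Module.finrank_fintype_fun_eq_card]
    exact h2
  intro b
  obtain ⟨g, hg⟩ := LinearMap.range_eq_top.mp h3 b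
  exact ⟨g, by simpa using hg⟩
/-- extension of a `Fin`-indexed signal to `ℕ` by zero -/
private noncomputable def nx {T : ℕ} {α : Type*} [Zero α] (u : Fin T → α) : ℕ → α :=
  fun k => if h : k < T then u ⟨k, h⟩ else 0

private lemma nx_app {T : ℕ} {α : Type*} [Zero α] (u : Fin T → α) {k : ℕ} (h : k < T) :
    nx u k = u ⟨k, h⟩ := dif_pos h

private lemma state_formula {n q : ℕ} (A : Matrix (Fin n) (Fin n) ℝ)
    (B : Matrix (Fin n) (Fin q) ℝ) {T : ℕ} {u : ℕ → Fin q → ℝ} {x : ℕ → Fin n → ℝ}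
    (hx : ∀ k, k < T → x (k + 1) = A *ᵥ x k + B *ᵥ u k) :
    ∀ k0 m, k0 + m ≤ T →
      x (k0 + m) = (A ^ m) *ᵥ x k0
        + ∑ s ∈ Finset.range m, (A ^ (m - 1 - s)) *ᵥ (B *ᵥ u (k0 + s)) := by
  intro k0 m
  induction m with
  | zero => intro _; simp
  | succ m ih =>
    intro h
    have h' : k0 + m ≤ T := by omega
    have hstep := hx (k0 + m) (by omega)
    have heq : k0 + (m + 1) = (k0 + m) + 1 := by omega
    rw [heq, hstep, ih h', Finset.sum_range_succ]
    rw [Matrix.mulVec_add, Matrix.mulVec_mulVec, ← pow_succ']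
    rw [mulVec_sum_right, add_assoc]
    congr 1
    congr 1
    · apply Finset.sum_congr rfl
      intro s hs
      rw [Finset.mem_range] at hs
      rw [Matrix.mulVec_mulVec, ← pow_succ',
        show m - 1 - s + 1 = m + 1 - 1 - s from by omega]
    · rw [show m + 1 - 1 - m = 0 by omega, pow_zero, Matrix.one_mulVec]

private lemma isTraj_nat {n q p L : ℕ} {A : Matrix (Fin n) (Fin n) ℝ}
    {B : Matrix (Fin n) (Fin q) ℝ} {C : Matrix (Fin p) (Fin n) ℝ}
    {u : Fin L → Fin q → ℝ} {y : Fin L → Fin p → ℝ} (h : IsTraj A B C L u y) :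
    ∃ xN : ℕ → Fin n → ℝ,
      (∀ k, k < L → xN (k + 1) = A *ᵥ xN k + B *ᵥ nx u k) ∧
      (∀ k (hk : k < L), y ⟨k, hk⟩ = C *ᵥ xN k) := by
  obtain ⟨x, hx⟩ := h
  refine ⟨nx x, ?_, ?_⟩
  · intro k hk
    have h1 := (hx ⟨k, hk⟩).1
    rw [nx_app x (show k + 1 < L + 1 by omega), nx_app x (show k < L + 1 by omega),
      nx_app u hk]
    have e1 : (⟨k, hk⟩ : Fin L).succ = ⟨k + 1, by omega⟩ := rfl
    have e2 : (⟨k, hk⟩ : Fin L).castSucc = ⟨k, by omega⟩ := rfl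
    rw [e1, e2] at h1
    exact h1
  · intro k hk
    have h2 := (hx ⟨k, hk⟩).2
    rw [nx_app x (show k < L + 1 by omega)]
    have e2 : (⟨k, hk⟩ : Fin L).castSucc = ⟨k, by omega⟩ := rfl
    rw [e2] at h2
    exact h2
private lemma chunks {n q : ℕ} (A : Matrix (Fin n) (Fin n) ℝ) (B : Matrix (Fin n) (Fin q) ℝ)
    {T L : ℕ} {u : ℕ → Fin q → ℝ} {x : ℕ → Fin n → ℝ}
    (hx : ∀ k, k < T → x (k + 1) = A *ᵥ x k + B *ᵥ u k) :
    ∀ (j r : ℕ), (j + r) * L ≤ T →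
      x ((j + r) * L) = ((A ^ L) ^ r) *ᵥ x (j * L)
        + ∑ s ∈ Finset.range r, ∑ i ∈ Finset.range L,
            ((A ^ ((r - 1 - s) * L + (L - 1 - i)) * B) *ᵥ u ((j + s) * L + i)) := by
  intro j r
  induction r with
  | zero => simp
  | succ r ih =>
    intro h
    have hmul : (j + (r + 1)) * L = (j + r) * L + L := by ring
    have h' : (j + r) * L ≤ T := by omega
    have hone := state_formula A B hx ((j + r) * L) L (by omega)
    rw [hmul, hone, ih h', Finset.sum_range_succ]
    rw [Matrix.mulVec_add, Matrix.mulVec_mulVec, ← pow_succ']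
    rw [mulVec_sum_right, add_assoc]
    congr 1
    congr 1
    · apply Finset.sum_congr rfl
      intro s hs
      rw [Finset.mem_range] at hs
      rw [mulVec_sum_right]
      apply Finset.sum_congr rfl
      intro i _
      rw [Matrix.mulVec_mulVec]
      congr 1
      rw [← Matrix.mul_assoc, ← pow_add]
      congr 2
      obtain ⟨d, rfl⟩ : ∃ d, r = s + d + 1 := ⟨r - s - 1, by omega⟩
      rw [show s + d + 1 + 1 - 1 - s = d + 1 from by omega,
        show s + d + 1 - 1 - s = d from by omega]
      ring
    · apply Finset.sum_congr rfl
      intro i _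
      rw [Matrix.mulVec_mulVec]
      congr 2
      rw [show r + 1 - 1 - r = 0 from by omega, zero_mul, zero_add]
private lemma sum_dot_left {ι α : Type*} [Fintype α] (s : Finset ι)
    (w : ι → α → ℝ) (v : α → ℝ) :
    (∑ r ∈ s, w r) ⬝ᵥ v = ∑ r ∈ s, w r ⬝ᵥ v := by
  simp [dotProduct, Finset.sum_apply, Finset.sum_mul]
  exact Finset.sum_comm

private lemma key_inj {n q T L : ℕ} (hL : 1 ≤ L)
    (A : Matrix (Fin n) (Fin n) ℝ) (B : Matrix (Fin n) (Fin q) ℝ)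
    (hctrb : Controllable A B)
    (ud : Fin T → Fin q → ℝ) (xd : ℕ → Fin n → ℝ)
    (hxd : ∀ k, k < T → xd (k + 1) = A *ᵥ xd k + B *ᵥ nx ud k)
    (hexc : PageExciting T ud L (n + 1))
    (hNn : n + 1 ≤ T / L)
    (η : Fin n → ℝ) (ζ : Fin L × Fin q → ℝ)
    (hv : ∀ j : Fin (T / L),
      η ⬝ᵥ xd ((j : ℕ) * L)
        + ∑ rr : Fin L × Fin q, ζ rr * nx ud ((j : ℕ) * L + (rr.1 : ℕ)) rr.2 = 0) :
    η = 0 ∧ ζ = 0 := by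
  have hNL : (T / L) * L ≤ T := Nat.div_mul_le_self T L
  have hidx : ∀ j i : ℕ, j < T / L → i < L → j * L + i < T := by
    intro j i hj hi
    have h1 : (j + 1) * L ≤ (T / L) * L := Nat.mul_le_mul_right L hj
    have h2 : j * L + i < (j + 1) * L := by rw [add_mul, one_mul]; omega
    omega
  -- Cayley–Hamilton data for A^L
  set a : ℕ → ℝ := fun r => (A ^ L).charpoly.coeff r with hadef
  have hCH : ∑ r ∈ Finset.range (n + 1), a r • (A ^ L) ^ r = 0 := by
    have h := Matrix.aeval_self_charpoly (A ^ L)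
    rw [Polynomial.aeval_eq_sum_range] at h
    rwa [Matrix.charpoly_natDegree_eq_dim, Fintype.card_fin] at h
  have han : a n = 1 := by
    have h2 := Polynomial.Monic.coeff_natDegree ((A ^ L).charpoly_monic)
    rwa [Matrix.charpoly_natDegree_eq_dim, Fintype.card_fin] at h2
  -- the basic shifted relations
  have hrel : ∀ j r : ℕ, j + r < T / L →
      η ⬝ᵥ ((A ^ L) ^ r *ᵥ xd (j * L))
      + (∑ s ∈ Finset.range r, ∑ i : Fin L,
          η ⬝ᵥ ((A ^ ((r - 1 - s) * L + (L - 1 - (i : ℕ))) * B) *ᵥ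
            nx ud ((j + s) * L + (i : ℕ))))
      + (∑ rr : Fin L × Fin q, ζ rr * nx ud ((j + r) * L + (rr.1 : ℕ)) rr.2) = 0 := by
    intro j r hjr
    have hle : (j + r) * L ≤ T := le_trans (Nat.mul_le_mul_right L (le_of_lt hjr)) hNL
    have hH := hv ⟨j + r, hjr⟩
    simp only [Fin.val_mk] at hH
    rw [chunks A B hxd j r hle] at hH
    rw [dotProduct_add] at hH
    rw [dot_sum_right] at hH
    have hinner : ∀ s : ℕ,
        η ⬝ᵥ (∑ i ∈ Finset.range L,
            ((A ^ ((r - 1 - s) * L + (L - 1 - i)) * B) *ᵥ nx ud ((j + s) * L + i)))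
        = ∑ i : Fin L, η ⬝ᵥ ((A ^ ((r - 1 - s) * L + (L - 1 - (i : ℕ))) * B) *ᵥ
            nx ud ((j + s) * L + (i : ℕ))) := by
      intro s
      rw [dot_sum_right]
      exact (Fin.sum_univ_eq_sum_range _ L).symm
    simp only [hinner] at hH
    linear_combination hH
  -- the coefficient vector
  set cc : ℕ → Fin L → Fin q → ℝ := fun s i m =>
    a s * ζ (i, m) + ∑ r ∈ Finset.Ico (s + 1) (n + 1),
      a r * (η ᵥ* (A ^ ((r - 1 - s) * L + (L - 1 - (i : ℕ))) * B)) m with hccdef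
  -- the key cancellation identity
  have hkey : ∀ j : ℕ, j + n < T / L →
      ∑ s ∈ Finset.range (n + 1), ∑ i : Fin L,
        (cc s i) ⬝ᵥ nx ud ((j + s) * L + (i : ℕ)) = 0 := by
    intro j hj
    have hsum0 : ∑ r ∈ Finset.range (n + 1), a r *
        (η ⬝ᵥ ((A ^ L) ^ r *ᵥ xd (j * L))
        + (∑ s ∈ Finset.range r, ∑ i : Fin L,
            η ⬝ᵥ ((A ^ ((r - 1 - s) * L + (L - 1 - (i : ℕ))) * B) *ᵥ
              nx ud ((j + s) * L + (i : ℕ))))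
        + (∑ rr : Fin L × Fin q, ζ rr * nx ud ((j + r) * L + (rr.1 : ℕ)) rr.2)) = 0 := by
      apply Finset.sum_eq_zero
      intro r hr
      rw [Finset.mem_range] at hr
      rw [hrel j r (by omega), mul_zero]
    simp only [mul_add, Finset.sum_add_distrib] at hsum0
    -- piece 1 vanishes by Cayley–Hamilton
    have hP1 : ∑ r ∈ Finset.range (n + 1),
        a r * (η ⬝ᵥ ((A ^ L) ^ r *ᵥ xd (j * L))) = 0 := by
      have he : ∀ r ∈ Finset.range (n + 1),
          a r * (η ⬝ᵥ ((A ^ L) ^ r *ᵥ xd (j * L)))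
          = η ⬝ᵥ ((a r • (A ^ L) ^ r) *ᵥ xd (j * L)) := by
        intro r _
        rw [Matrix.smul_mulVec, dotProduct_smul, smul_eq_mul]
      rw [Finset.sum_congr rfl he, ← dot_sum_right, ← sum_matrix_mulVec, hCH,
        Matrix.zero_mulVec, dotProduct_zero]
    -- piece 2: reorder the triangular sum
    have hP2 : ∑ r ∈ Finset.range (n + 1),
        a r * (∑ s ∈ Finset.range r, ∑ i : Fin L,
          η ⬝ᵥ ((A ^ ((r - 1 - s) * L + (L - 1 - (i : ℕ))) * B) *ᵥ
            nx ud ((j + s) * L + (i : ℕ))))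
        = ∑ s ∈ Finset.range (n + 1), ∑ i : Fin L,
            ∑ r ∈ Finset.Ico (s + 1) (n + 1),
              a r * (η ⬝ᵥ ((A ^ ((r - 1 - s) * L + (L - 1 - (i : ℕ))) * B) *ᵥ
                nx ud ((j + s) * L + (i : ℕ)))) := by
      simp only [Finset.mul_sum]
      simp only [Finset.range_eq_Ico]
      rw [← Finset.sum_Ico_Ico_comm' 0 (n + 1)
        (fun s r => ∑ i : Fin L,
          a r * (η ⬝ᵥ ((A ^ ((r - 1 - s) * L + (L - 1 - (i : ℕ))) * B) *ᵥ
            nx ud ((j + s) * L + (i : ℕ)))))]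
      apply Finset.sum_congr rfl
      intro r _
      exact Finset.sum_comm
    -- piece 3: expand the product-type sum
    have hP3 : ∑ r ∈ Finset.range (n + 1),
        a r * (∑ rr : Fin L × Fin q, ζ rr * nx ud ((j + r) * L + (rr.1 : ℕ)) rr.2)
        = ∑ s ∈ Finset.range (n + 1), ∑ i : Fin L,
            ∑ m : Fin q, a s * ζ (i, m) * nx ud ((j + s) * L + (i : ℕ)) m := by
      apply Finset.sum_congr rfl
      intro r _
      rw [Fintype.sum_prod_type, Finset.mul_sum]
      apply Finset.sum_congr rfl
      intro i _
      rw [Finset.mul_sum]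
      apply Finset.sum_congr rfl
      intro m _
      ring
    -- assemble
    have hexp : ∀ s ∈ Finset.range (n + 1), ∀ i : Fin L,
        (cc s i) ⬝ᵥ nx ud ((j + s) * L + (i : ℕ))
        = (∑ m : Fin q, a s * ζ (i, m) * nx ud ((j + s) * L + (i : ℕ)) m)
          + ∑ r ∈ Finset.Ico (s + 1) (n + 1),
              a r * (η ⬝ᵥ ((A ^ ((r - 1 - s) * L + (L - 1 - (i : ℕ))) * B) *ᵥ
                nx ud ((j + s) * L + (i : ℕ)))) := by
      intro s _ i
      simp only [hccdef, dotProduct, add_mul, Finset.sum_add_distrib, Finset.sum_mul]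
      congr 1
      rw [Finset.sum_comm]
      apply Finset.sum_congr rfl
      intro r _
      have hdp := Matrix.dotProduct_mulVec η
        (A ^ ((r - 1 - s) * L + (L - 1 - (i : ℕ))) * B) (nx ud (j * L + s * L + (i : ℕ)))
      simp only [dotProduct] at hdp
      simp only [mul_assoc, ← Finset.mul_sum]
      congr 1
      exact hdp.symm
    calc ∑ s ∈ Finset.range (n + 1), ∑ i : Fin L,
          (cc s i) ⬝ᵥ nx ud ((j + s) * L + (i : ℕ))
        = (∑ s ∈ Finset.range (n + 1), ∑ i : Fin L,
            ∑ m : Fin q, a s * ζ (i, m) * nx ud ((j + s) * L + (i : ℕ)) m)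
          + ∑ s ∈ Finset.range (n + 1), ∑ i : Fin L,
              ∑ r ∈ Finset.Ico (s + 1) (n + 1),
                a r * (η ⬝ᵥ ((A ^ ((r - 1 - s) * L + (L - 1 - (i : ℕ))) * B) *ᵥ
                  nx ud ((j + s) * L + (i : ℕ)))) := by
          rw [← Finset.sum_add_distrib]
          apply Finset.sum_congr rfl
          intro s hs
          rw [← Finset.sum_add_distrib]
          apply Finset.sum_congr rfl
          intro i _
          exact hexp s hs i
      _ = 0 := by rw [← hP2, ← hP3]; linarith [hsum0, hP1]
  -- full row rank of the stacked Page matrix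
  have hexc' : (pageStackMat T ud L (n + 1)).rank = q * L * (n + 1) := hexc
  have hrank : (pageStackMat T ud L (n + 1)).rank
      = Fintype.card (Fin (n + 1) × Fin L × Fin q) := by
    rw [hexc']
    simp only [Fintype.card_prod, Fintype.card_fin]
    ring
  set c : Fin (n + 1) × Fin L × Fin q → ℝ := fun t => cc t.1 t.2.1 t.2.2 with hcdef
  have hcS : c ᵥ* pageStackMat T ud L (n + 1) = 0 := by
    funext jc
    have hjc : (jc : ℕ) + n < T / L := by
      have := jc.2
      omega
    have hS : ∀ t : Fin (n + 1) × Fin L × Fin q,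
        pageStackMat T ud L (n + 1) t jc
        = nx ud (((jc : ℕ) + (t.1 : ℕ)) * L + (t.2.1 : ℕ)) t.2.2 := by
      intro t
      have hlt : ((jc : ℕ) + (t.1 : ℕ)) * L + (t.2.1 : ℕ) < T := by
        apply hidx
        · have := t.1.2; omega
        · exact t.2.1.2
      simp only [pageStackMat]
      rw [dif_pos hlt, nx_app ud hlt]
    have hgoal : (c ᵥ* pageStackMat T ud L (n + 1)) jc
        = ∑ s : Fin (n + 1), ∑ i : Fin L, ∑ m : Fin q,
            cc (s : ℕ) i m * nx ud (((jc : ℕ) + (s : ℕ)) * L + (i : ℕ)) m := by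
      simp only [Matrix.vecMul, dotProduct, Fintype.sum_prod_type]
      apply Finset.sum_congr rfl; intro s _
      apply Finset.sum_congr rfl; intro i _
      apply Finset.sum_congr rfl; intro m _
      rw [hS (s, i, m)]
    show (c ᵥ* pageStackMat T ud L (n + 1)) jc = 0
    rw [hgoal]
    have hk := hkey (jc : ℕ) hjc
    simp only [dotProduct] at hk
    rw [Fin.sum_univ_eq_sum_range (fun s => ∑ i : Fin L, ∑ m : Fin q,
      cc s i m * nx ud (((jc : ℕ) + s) * L + (i : ℕ)) m) (n + 1)]
    exact hk
  have hc0 : c = 0 := vecMul_eq_zero_of_rank _ hrank c hcS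
  -- extract that ζ vanishes
  have hζ : ζ = 0 := by
    funext rr
    have hcn := congrFun hc0 (⟨n, Nat.lt_succ_self n⟩, rr.1, rr.2)
    simp only [hcdef, hccdef, Pi.zero_apply] at hcn
    rw [Finset.Ico_self, Finset.sum_empty, han, one_mul, add_zero] at hcn
    simpa using hcn
  -- the Markov parameters annihilated by η
  have hw : ∀ m' : ℕ, m' < n → ∀ e : ℕ, e < L →
      η ᵥ* (A ^ (m' * L + e) * B) = 0 := by
    intro m'
    induction m' using Nat.strong_induction_on with
    | _ m' ih =>
      intro hm' e he
      funext mq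
      have hceq := congrFun hc0 (⟨n - 1 - m', by omega⟩, ⟨L - 1 - e, by omega⟩, mq)
      simp only [hcdef, hccdef, Pi.zero_apply, hζ, mul_zero, zero_add] at hceq
      rw [Finset.sum_Ico_eq_sum_range] at hceq
      rw [show n + 1 - (n - 1 - m' + 1) = m' + 1 from by omega] at hceq
      rw [Finset.sum_range_succ] at hceq
      have hzero : ∀ t ∈ Finset.range m', a (n - 1 - m' + 1 + t) *
          (η ᵥ* (A ^ ((n - 1 - m' + 1 + t - 1 - (n - 1 - m')) * L
            + (L - 1 - (L - 1 - e))) * B)) mq = 0 := by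
        intro t ht
        rw [Finset.mem_range] at ht
        rw [show n - 1 - m' + 1 + t - 1 - (n - 1 - m') = t from by omega,
          show L - 1 - (L - 1 - e) = e from by omega,
          ih t (by omega) (by omega) e he]
        simp
      rw [Finset.sum_eq_zero hzero, zero_add,
        show n - 1 - m' + 1 + m' - 1 - (n - 1 - m') = m' from by omega,
        show L - 1 - (L - 1 - e) = e from by omega,
        show n - 1 - m' + 1 + m' = n from by omega, han, one_mul] at hceq
      simpa using hceq
  -- conclude η = 0 by controllability
  have hηctrb : η ᵥ* ctrbMat A B = 0 := by
    funext pm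
    obtain ⟨pp, mm⟩ := pm
    have hm' : (pp : ℕ) / L < n := lt_of_le_of_lt (Nat.div_le_self _ _) pp.2
    have hme : (pp : ℕ) % L < L := Nat.mod_lt _ (by omega)
    have hwc := congrFun (hw ((pp : ℕ) / L) hm' ((pp : ℕ) % L) hme) mm
    rw [show ((pp : ℕ) / L) * L + (pp : ℕ) % L = (pp : ℕ) from by
      rw [mul_comm]; exact Nat.div_add_mod _ _] at hwc
    simp only [Matrix.vecMul, dotProduct, ctrbMat, Matrix.of_apply, Pi.zero_apply] at hwc ⊢
    exact hwc
  have hctrb' : (ctrbMat A B).rank = n := hctrb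
  have hη : η = 0 := vecMul_eq_zero_of_rank (ctrbMat A B)
    (by rw [hctrb', Fintype.card_fin]) η hηctrb
  exact ⟨hη, hζ⟩

private lemma comb_mulVec {α β N : Type} [Fintype α] [Fintype β] [Fintype N]
    (P : Matrix β α ℝ) (g : N → ℝ) (w : N → α → ℝ) :
    ∑ j : N, g j • (P *ᵥ w j) = P *ᵥ (∑ j : N, g j • w j) := by
  rw [mulVec_sum_right]
  apply Finset.sum_congr rfl
  intro j _
  rw [Matrix.mulVec_smul]


/-- Willems' fundamental lemma, Page matrix version.
If `(A, B)` is controllable, `(u^d, y^d)` is a length-`T` trajectory of the system,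
`1 ≤ L`, and `u^d` is `L`-Page exciting of order `n + 1`, then every length-`L`
trajectory `(u, y)` of the system can be constructed as `𝓟_L(u^d) g = col(u)`,
`𝓟_L(y^d) g = col(y)` for some `g ∈ ℝ^{⌊T/L⌋}`. -/
theorem stmt1 {n q p T : ℕ}
    (A : Matrix (Fin n) (Fin n) ℝ) (B : Matrix (Fin n) (Fin q) ℝ)
    (C : Matrix (Fin p) (Fin n) ℝ)
    (hctrb : Controllable A B)
    (ud : Fin T → Fin q → ℝ) (yd : Fin T → Fin p → ℝ)
    (hd : IsTraj A B C T ud yd)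
    (L : ℕ) (hL : 1 ≤ L)
    (hexc : PageExciting T ud L (n + 1)) :
    ∀ (u : Fin L → Fin q → ℝ) (y : Fin L → Fin p → ℝ),
      IsTraj A B C L u y →
      ∃ g : Fin (T / L) → ℝ,
        pageMat T ud L *ᵥ g = colVec u ∧ pageMat T yd L *ᵥ g = colVec y := by
  intro u y hu
  by_cases hq0 : q = 0
  · -- degenerate case: no inputs, hence (by controllability) no states and zero outputs
    subst hq0
    have hn0 : n = 0 := by
      have h1 := (ctrbMat A B).rank_le_card_width
      have h2 : (ctrbMat A B).rank = n := hctrb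
      simp only [Fintype.card_prod, Fintype.card_fin, Nat.mul_zero] at h1
      omega
    subst hn0
    refine ⟨0, ?_, ?_⟩
    · funext rr
      exact rr.2.elim0
    · rw [Matrix.mulVec_zero]
      funext rr
      obtain ⟨x, hx⟩ := hu
      have h2 := (hx rr.1).2
      have h3 : y rr.1 rr.2 = 0 := by
        rw [h2]
        simp [Matrix.mulVec, dotProduct]
      simp [colVec, h3]
  · have hq1 : 1 ≤ q := Nat.one_le_iff_ne_zero.mpr hq0
    have hNL : (T / L) * L ≤ T := Nat.div_mul_le_self T L
    have hexc' : (pageStackMat T ud L (n + 1)).rank = q * L * (n + 1) := hexc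
    have hNn : n + 1 ≤ T / L := by
      by_contra hc
      push_neg at hc
      have h1 := (pageStackMat T ud L (n + 1)).rank_le_card_width
      rw [hexc', Fintype.card_fin,
        show T / L - (n + 1) + 1 = 1 from by omega] at h1
      have hub : n + 1 ≤ q * L * (n + 1) := by
        calc n + 1 = 1 * 1 * (n + 1) := by ring
          _ ≤ q * L * (n + 1) := Nat.mul_le_mul_right _ (Nat.mul_le_mul hq1 hL)
      have hub2 : 1 * 1 ≤ q * L := Nat.mul_le_mul hq1 hL
      have hn0 : n = 0 := by omega
      have hqL : q * L = 1 := by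
        rw [hn0] at h1
        simp only [Nat.zero_add, Nat.mul_one] at h1
        omega
      have hL1 : L = 1 := by
        have hdvd : L ∣ 1 := ⟨q, by rw [mul_comm]; exact hqL.symm⟩
        have := Nat.le_of_dvd one_pos hdvd
        omega
      have hT0 : T = 0 := by
        rw [hL1, Nat.div_one] at hc
        omega
      have hS0 : pageStackMat T ud L (n + 1) = 0 := by
        funext t c
        simp only [pageStackMat]
        rw [dif_neg (by omega)]
        rfl
      rw [hS0, Matrix.rank_zero] at hexc'
      rw [hn0] at hexc'
      simp only [Nat.zero_add, Nat.mul_one] at hexc'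
      omega
    obtain ⟨xd, hxd, hyd⟩ := isTraj_nat hd
    obtain ⟨xN, hxN, hyN⟩ := isTraj_nat hu
    have hidx : ∀ j i : ℕ, j < T / L → i < L → j * L + i < T := by
      intro j i hj hi
      have h1 : (j + 1) * L ≤ (T / L) * L := Nat.mul_le_mul_right L hj
      have h2 : j * L + i < (j + 1) * L := by rw [add_mul, one_mul]; omega
      omega
    set M : Matrix (Fin n ⊕ (Fin L × Fin q)) (Fin (T / L)) ℝ :=
      Matrix.of (fun r j => Sum.elim (fun i => xd ((j : ℕ) * L) i)
        (fun rr => nx ud ((j : ℕ) * L + (rr.1 : ℕ)) rr.2) r) with hMdef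
    have hsurj : Function.Surjective (fun g => M *ᵥ g) := by
      apply mulVec_surj_of_vecMul_inj
      intro v hv
      have hk := key_inj hL A B hctrb ud xd hxd hexc hNn
        (fun i => v (Sum.inl i)) (fun rr => v (Sum.inr rr)) ?_
      · funext r
        cases r with
        | inl i => exact congrFun hk.1 i
        | inr rr => exact congrFun hk.2 rr
      · intro j
        have hvj := congrFun hv j
        simp only [Matrix.vecMul, dotProduct, Pi.zero_apply, Fintype.sum_sum_type,
          hMdef, Matrix.of_apply, Sum.elim_inl, Sum.elim_inr] at hvj
        simp only [dotProduct]
        exact hvj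
    obtain ⟨g, hg⟩ := hsurj (Sum.elim (xN 0) (colVec u))
    have hgl : ∑ j : Fin (T / L), g j • xd ((j : ℕ) * L) = xN 0 := by
      funext i
      have h1 := congrFun hg (Sum.inl i)
      simp only [Matrix.mulVec, dotProduct, hMdef, Matrix.of_apply, Sum.elim_inl] at h1
      rw [Finset.sum_apply]
      simp only [Pi.smul_apply, smul_eq_mul]
      rw [← h1]
      apply Finset.sum_congr rfl
      intro jj _
      ring
    have hgr : ∀ (s : ℕ) (hs : s < L),
        ∑ j : Fin (T / L), g j • nx ud ((j : ℕ) * L + s) = nx u s := by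
      intro s hs
      funext m
      have h1 := congrFun hg (Sum.inr (⟨s, hs⟩, m))
      simp only [Matrix.mulVec, dotProduct, hMdef, Matrix.of_apply, Sum.elim_inr] at h1
      rw [Finset.sum_apply]
      simp only [Pi.smul_apply, smul_eq_mul]
      rw [nx_app u hs]
      have h2 : colVec u ((⟨s, hs⟩ : Fin L), m) = u ⟨s, hs⟩ m := rfl
      rw [h2] at h1
      rw [← h1]
      apply Finset.sum_congr rfl
      intro jj _
      ring
    have hcomb : ∀ k : ℕ, k < L →
        ∑ j : Fin (T / L), g j • xd ((j : ℕ) * L + k) = xN k := by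
      intro k hk
      have hstep : ∀ j : Fin (T / L), xd ((j : ℕ) * L + k)
          = A ^ k *ᵥ xd ((j : ℕ) * L)
            + ∑ s ∈ Finset.range k, A ^ (k - 1 - s) *ᵥ (B *ᵥ nx ud ((j : ℕ) * L + s)) := by
        intro j
        exact state_formula A B hxd ((j : ℕ) * L) k
          (le_of_lt (hidx (j : ℕ) k j.2 hk))
      have hres : xN (0 + k) = A ^ k *ᵥ xN 0
          + ∑ s ∈ Finset.range k, A ^ (k - 1 - s) *ᵥ (B *ᵥ nx u (0 + s)) :=
        state_formula A B hxN 0 k (by omega)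
      simp only [Nat.zero_add] at hres
      calc ∑ j : Fin (T / L), g j • xd ((j : ℕ) * L + k)
          = ∑ j : Fin (T / L), (g j • (A ^ k *ᵥ xd ((j : ℕ) * L))
            + ∑ s ∈ Finset.range k, g j • (A ^ (k - 1 - s) *ᵥ (B *ᵥ nx ud ((j : ℕ) * L + s)))) := by
            apply Finset.sum_congr rfl
            intro j _
            rw [hstep j, smul_add, Finset.smul_sum]
        _ = (∑ j : Fin (T / L), g j • (A ^ k *ᵥ xd ((j : ℕ) * L)))
            + ∑ s ∈ Finset.range k, ∑ j : Fin (T / L),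
                g j • (A ^ (k - 1 - s) *ᵥ (B *ᵥ nx ud ((j : ℕ) * L + s))) := by
            rw [Finset.sum_add_distrib, Finset.sum_comm]
        _ = A ^ k *ᵥ xN 0
            + ∑ s ∈ Finset.range k, A ^ (k - 1 - s) *ᵥ (B *ᵥ nx u s) := by
            congr 1
            · rw [comb_mulVec, hgl]
            · apply Finset.sum_congr rfl
              intro s hs
              rw [Finset.mem_range] at hs
              have hBu : ∀ j : Fin (T / L), g j • (A ^ (k - 1 - s) *ᵥ (B *ᵥ nx ud ((j : ℕ) * L + s)))
                  = g j • ((A ^ (k - 1 - s) * B) *ᵥ nx ud ((j : ℕ) * L + s)) := by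
                intro j
                rw [Matrix.mulVec_mulVec]
              simp only [hBu]
              rw [comb_mulVec, hgr s (by omega), Matrix.mulVec_mulVec]
        _ = xN k := hres.symm
    refine ⟨g, ?_, ?_⟩
    · funext rr
      have h1 := congrFun hg (Sum.inr rr)
      have hpe : ∀ j : Fin (T / L),
          pageMat T ud L rr j = nx ud ((j : ℕ) * L + (rr.1 : ℕ)) rr.2 := by
        intro j
        have hlt := hidx (j : ℕ) (rr.1 : ℕ) j.2 rr.1.2
        simp only [pageMat]
        rw [dif_pos hlt, nx_app ud hlt]
      show (pageMat T ud L *ᵥ g) rr = colVec u rr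
      simp only [Matrix.mulVec, dotProduct, hMdef, Matrix.of_apply, Sum.elim_inr] at h1 ⊢
      rw [Finset.sum_congr rfl (fun j _ => by rw [hpe j])]
      exact h1
    · funext rr
      obtain ⟨ii, mm⟩ := rr
      have hpe : ∀ j : Fin (T / L),
          pageMat T yd L (ii, mm) j = (C *ᵥ xd ((j : ℕ) * L + (ii : ℕ))) mm := by
        intro j
        have hlt := hidx (j : ℕ) (ii : ℕ) j.2 ii.2
        simp only [pageMat]
        rw [dif_pos hlt, hyd _ hlt]
      show (pageMat T yd L *ᵥ g) (ii, mm) = colVec y (ii, mm)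
      have hyv : y ii = C *ᵥ xN (ii : ℕ) := by
        have := hyN (ii : ℕ) ii.2
        simpa [Fin.eta] using this
      simp only [Matrix.mulVec, dotProduct]
      rw [Finset.sum_congr rfl (fun j _ => by rw [hpe j])]
      have hfin : ∑ j : Fin (T / L), (C *ᵥ xd ((j : ℕ) * L + (ii : ℕ))) mm * g j
          = (C *ᵥ (∑ j : Fin (T / L), g j • xd ((j : ℕ) * L + (ii : ℕ)))) mm := by
        rw [← comb_mulVec]
        rw [Finset.sum_apply]
        apply Finset.sum_congr rfl
        intro j _
        simp only [Pi.smul_apply, smul_eq_mul]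
        ring
      rw [hfin, hcomb (ii : ℕ) ii.2]
      show (C *ᵥ xN (ii : ℕ)) mm = colVec y (ii, mm)
      rw [← hyv]
      rfl
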